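/- Let k be a complete non-archimedean field and f : k → k a transcendental entire function. Then for every w ∈ k the preimage f⁻¹(w) is unbounded: for every R > 0 there exists z ∈ k with |z| > R and f(z) = w. -/

import Mathlib

set_option linter.unusedSectionVars false

open Polynomial Filter

namespace Montel12

variable {k : Type*} [NontriviallyNormedField k] [IsUltrametricDist k]

noncomputable def Q (m : Multiset k) : k[X] := (m.map (fun x => X - C x)).prod

lemma Q_monic (m : Multiset k) : (Q m).Monic :=
  monic_multiset_prod_of_monic _ _ (fun x _ => monic_X_sub_C x)

lemma Q_natDegree (m : Multiset k) : (Q m).natDegree = Multiset.card m := by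
  rw [Q, natDegree_multiset_prod_of_monic]
  · simp [natDegree_X_sub_C]
  · simpa using fun x _ => monic_X_sub_C x

lemma Q_zero : Q (0 : Multiset k) = 1 := by simp [Q]

lemma Q_cons (x : k) (m : Multiset k) : Q (x ::ₘ m) = (X - C x) * Q m := by
  simp [Q]

lemma coeff_XsubC_mul_zero (x : k) (q : k[X]) :
    ((X - C x) * q).coeff 0 = -(x * q.coeff 0) := by
  simp [sub_mul, coeff_sub, coeff_C_mul]

lemma coeff_XsubC_mul_succ (x : k) (q : k[X]) (j : ℕ) :
    ((X - C x) * q).coeff (j + 1) = q.coeff j - x * q.coeff (j + 1) := by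
  rw [sub_mul, coeff_sub, coeff_X_mul, coeff_C_mul]

lemma norm_multiset_map_prod (m : Multiset k) (f : k → k) :
    ‖(m.map f).prod‖ = (m.map (fun x => ‖f x‖)).prod := by
  induction m using Multiset.induction_on with
  | empty => simp
  | cons x m ih => simp [norm_mul, ih]


lemma prodmax_pos {ρ : ℝ} (hρ : 0 < ρ) (m : Multiset k) :
    0 < (m.map (fun x => max ρ ‖x‖)).prod := by
  induction m using Multiset.induction_on with
  | empty => simp
  | cons x m ih => simpa using mul_pos (lt_max_of_lt_left hρ) ih


lemma nsub (x y : k) : ‖x - y‖ ≤ max ‖x‖ ‖y‖ := by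
  rw [sub_eq_add_neg]
  simpa using IsUltrametricDist.norm_add_le_max x (-y)

/-- L1: fundamental coefficient bound. -/
lemma L1 {ρ : ℝ} (hρ : 0 < ρ) (m : Multiset k) (j : ℕ) :
    ‖(Q m).coeff j‖ * ρ ^ j ≤ (m.map (fun x => max ρ ‖x‖)).prod := by
  induction m using Multiset.induction_on generalizing j with
  | empty =>
      rcases j with _ | j
      · simp [Q_zero]
      · simp [Q_zero, coeff_one]
  | cons x m ih =>
      rw [Q_cons]
      have hprod : ((x ::ₘ m).map (fun y => max ρ ‖y‖)).prod
          = max ρ ‖x‖ * (m.map (fun y => max ρ ‖y‖)).prod := by simp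
      have hmpos : 0 < (m.map (fun y => max ρ ‖y‖)).prod := prodmax_pos hρ m
      have hxmax : (0:ℝ) < max ρ ‖x‖ := lt_max_of_lt_left hρ
      rw [hprod]
      rcases j with _ | j
      · rw [coeff_XsubC_mul_zero]
        simp only [pow_zero, mul_one, norm_neg, norm_mul]
        have h0 := ih 0
        simp only [pow_zero, mul_one] at h0
        exact mul_le_mul (le_max_right _ _) h0 (norm_nonneg _) hxmax.le
      · rw [coeff_XsubC_mul_succ]
        refine le_trans (mul_le_mul_of_nonneg_right
          (nsub _ _) (by positivity)) ?_
        rw [max_mul_of_nonneg _ _ (by positivity : (0:ℝ) ≤ ρ ^ (j+1))]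
        apply max_le
        · calc ‖(Q m).coeff j‖ * ρ ^ (j + 1) = (‖(Q m).coeff j‖ * ρ ^ j) * ρ := by ring
            _ ≤ (m.map (fun y => max ρ ‖y‖)).prod * ρ :=
                mul_le_mul_of_nonneg_right (ih j) hρ.le
            _ ≤ (m.map (fun y => max ρ ‖y‖)).prod * max ρ ‖x‖ :=
                mul_le_mul_of_nonneg_left (le_max_left _ _) hmpos.le
            _ = max ρ ‖x‖ * (m.map (fun y => max ρ ‖y‖)).prod := by ring
        · calc ‖x * (Q m).coeff (j+1)‖ * ρ ^ (j + 1)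
              = ‖x‖ * (‖(Q m).coeff (j+1)‖ * ρ ^ (j+1)) := by rw [norm_mul]; ring
            _ ≤ ‖x‖ * (m.map (fun y => max ρ ‖y‖)).prod :=
                mul_le_mul_of_nonneg_left (ih (j+1)) (norm_nonneg _)
            _ ≤ max ρ ‖x‖ * (m.map (fun y => max ρ ‖y‖)).prod :=
                mul_le_mul_of_nonneg_right (le_max_right _ _) hmpos.le


lemma normprod_pos {m : Multiset k} (h : ∀ x ∈ m, (0:ℝ) < ‖x‖) :
    0 < (m.map (fun x => ‖x‖)).prod := by
  induction m using Multiset.induction_on with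
  | empty => simp
  | cons x m ih =>
      simp only [Multiset.map_cons, Multiset.prod_cons]
      exact mul_pos (h x (Multiset.mem_cons_self x m))
        (ih fun y hy => h y (Multiset.mem_cons_of_mem hy))

/-- L1 specialized: all norms at most ρ. -/
lemma L1_le {ρ : ℝ} (hρ : 0 < ρ) {m : Multiset k} (h : ∀ x ∈ m, ‖x‖ ≤ ρ) (j : ℕ) :
    ‖(Q m).coeff j‖ * ρ ^ j ≤ ρ ^ Multiset.card m := by
  have := L1 hρ m j
  rwa [Multiset.map_congr rfl (fun x hx => max_eq_left (h x hx)),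
    Multiset.map_const', Multiset.prod_replicate] at this

/-- L1 specialized: all norms at least ρ. -/
lemma L1_ge {ρ : ℝ} (hρ : 0 < ρ) {m : Multiset k} (h : ∀ x ∈ m, ρ ≤ ‖x‖) (j : ℕ) :
    ‖(Q m).coeff j‖ * ρ ^ j ≤ (m.map (fun x => ‖x‖)).prod := by
  have := L1 hρ m j
  rwa [Multiset.map_congr rfl (fun x hx => max_eq_right (h x hx))] at this

/-- L1s: strict version when all norms are < ρ. -/
lemma L1s {ρ : ℝ} (hρ : 0 < ρ) {m : Multiset k} (h : ∀ x ∈ m, ‖x‖ < ρ) :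
    ∀ j < Multiset.card m, ‖(Q m).coeff j‖ * ρ ^ j < ρ ^ Multiset.card m := by
  induction m using Multiset.induction_on with
  | empty => intro j hj; simp at hj
  | cons x m ih =>
      intro j hj
      have hx : ‖x‖ < ρ := h x (Multiset.mem_cons_self x m)
      have hm : ∀ y ∈ m, ‖y‖ < ρ := fun y hy => h y (Multiset.mem_cons_of_mem hy)
      have hm' : ∀ y ∈ m, ‖y‖ ≤ ρ := fun y hy => (hm y hy).le
      have hcard : Multiset.card (x ::ₘ m) = Multiset.card m + 1 := by simp
      rw [hcard] at hj ⊢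
      have hppos : (0:ℝ) < ρ ^ Multiset.card m := pow_pos hρ _
      rw [Q_cons]
      rcases j with _ | i
      · rw [coeff_XsubC_mul_zero]
        simp only [pow_zero, mul_one, norm_neg, norm_mul]
        calc ‖x‖ * ‖(Q m).coeff 0‖ ≤ ‖x‖ * ρ ^ Multiset.card m := by
              have := L1_le hρ hm' 0
              simpa using mul_le_mul_of_nonneg_left (by simpa using this) (norm_nonneg x)
          _ < ρ * ρ ^ Multiset.card m := mul_lt_mul_of_pos_right hx hppos
          _ = ρ ^ (Multiset.card m + 1) := by ring
      · rw [coeff_XsubC_mul_succ]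
        have hji : i < Multiset.card m := by omega
        refine lt_of_le_of_lt (mul_le_mul_of_nonneg_right (nsub _ _) (by positivity)) ?_
        rw [max_mul_of_nonneg _ _ (by positivity : (0:ℝ) ≤ ρ ^ (i+1))]
        apply max_lt
        · calc ‖(Q m).coeff i‖ * ρ ^ (i + 1) = (‖(Q m).coeff i‖ * ρ ^ i) * ρ := by ring
            _ < ρ ^ Multiset.card m * ρ := mul_lt_mul_of_pos_right (ih hm i hji) hρ
            _ = ρ ^ (Multiset.card m + 1) := by ring
        · calc ‖x * (Q m).coeff (i+1)‖ * ρ ^ (i + 1)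
              = ‖x‖ * (‖(Q m).coeff (i+1)‖ * ρ ^ (i+1)) := by rw [norm_mul]; ring
            _ ≤ ‖x‖ * ρ ^ Multiset.card m :=
                mul_le_mul_of_nonneg_left (L1_le hρ hm' (i+1)) (norm_nonneg _)
            _ < ρ * ρ ^ Multiset.card m := mul_lt_mul_of_pos_right hx hppos
            _ = ρ ^ (Multiset.card m + 1) := by ring

/-- Norm of the constant coefficient. -/
lemma coeff_zero_norm (m : Multiset k) :
    ‖(Q m).coeff 0‖ = (m.map (fun x => ‖x‖)).prod := by
  induction m using Multiset.induction_on with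
  | empty => simp [Q_zero]
  | cons x m ih =>
      rw [Q_cons, coeff_XsubC_mul_zero]
      simp only [norm_neg, norm_mul, Multiset.map_cons, Multiset.prod_cons, ih]

/-- L3s: strict bound for positive-index coefficients when all roots are large. -/
lemma L3s {r : ℝ} (hr : 0 < r) {v : Multiset k} (h : ∀ x ∈ v, r < ‖x‖) :
    ∀ j, 1 ≤ j → ‖(Q v).coeff j‖ * r ^ j < (v.map (fun x => ‖x‖)).prod := by
  induction v using Multiset.induction_on with
  | empty =>
      intro j hj
      rcases j with _ | i
      · omega
      · simp [Q_zero, coeff_one]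
  | cons x v ih =>
      intro j hj
      have hx : r < ‖x‖ := h x (Multiset.mem_cons_self x v)
      have hv : ∀ y ∈ v, r < ‖y‖ := fun y hy => h y (Multiset.mem_cons_of_mem hy)
      have hv' : ∀ y ∈ v, r ≤ ‖y‖ := fun y hy => (hv y hy).le
      have hA : 0 < (v.map (fun x => ‖x‖)).prod :=
        normprod_pos (fun y hy => lt_trans hr (hv y hy))
      have hprod : ((x ::ₘ v).map (fun y => ‖y‖)).prod
          = ‖x‖ * (v.map (fun y => ‖y‖)).prod := by simp
      rw [hprod, Q_cons]
      rcases j with _ | i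
      · omega
      · rw [coeff_XsubC_mul_succ]
        refine lt_of_le_of_lt (mul_le_mul_of_nonneg_right (nsub _ _) (by positivity)) ?_
        rw [max_mul_of_nonneg _ _ (by positivity : (0:ℝ) ≤ r ^ (i+1))]
        apply max_lt
        · calc ‖(Q v).coeff i‖ * r ^ (i + 1) = (‖(Q v).coeff i‖ * r ^ i) * r := by ring
            _ ≤ (v.map (fun y => ‖y‖)).prod * r :=
                mul_le_mul_of_nonneg_right (L1_ge hr hv' i) hr.le
            _ < (v.map (fun y => ‖y‖)).prod * ‖x‖ := mul_lt_mul_of_pos_left hx hA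
            _ = ‖x‖ * (v.map (fun y => ‖y‖)).prod := by ring
        · calc ‖x * (Q v).coeff (i+1)‖ * r ^ (i + 1)
              = ‖x‖ * (‖(Q v).coeff (i+1)‖ * r ^ (i+1)) := by rw [norm_mul]; ring
            _ < ‖x‖ * (v.map (fun y => ‖y‖)).prod :=
                mul_lt_mul_of_pos_left (ih hv (i+1) (by omega)) (lt_trans hr hx)


lemma norm_add_eq_left {a b : k} (h : ‖b‖ < ‖a‖) : ‖a + b‖ = ‖a‖ := by
  rw [IsUltrametricDist.norm_add_eq_max_of_norm_ne_norm (by exact ne_of_gt h :  ‖a‖ ≠ ‖b‖)]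
  exact max_eq_left h.le

lemma norm_sum_lt {ι : Type*} {s : Finset ι} {f : ι → k} {B : ℝ} (hB : 0 < B)
    (h : ∀ i ∈ s, ‖f i‖ < B) : ‖∑ i ∈ s, f i‖ < B := by
  rcases s.eq_empty_or_nonempty with rfl | hs
  · simpa using hB
  · exact lt_of_le_of_lt (hs.norm_sum_le_sup'_norm f) ((Finset.sup'_lt_iff hs).mpr h)

lemma Q_add (u v : Multiset k) : Q (u + v) = Q u * Q v := by
  simp [Q, Multiset.prod_add]

lemma Q_coeff_card (u : Multiset k) : ‖(Q u).coeff (Multiset.card u)‖ = 1 := by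
  have h := (Q_monic u).coeff_natDegree
  rw [Q_natDegree] at h
  rw [h, norm_one]

/-- L2: the norm of the critical coefficient. -/
lemma L2 {r : ℝ} (hr : 0 < r) {u v : Multiset k}
    (hu : ∀ x ∈ u, ‖x‖ ≤ r) (hv : ∀ x ∈ v, r < ‖x‖) :
    ‖(Q (u + v)).coeff (Multiset.card u)‖ = (v.map (fun x => ‖x‖)).prod := by
  classical
  set s := Multiset.card u with hs
  set A := (v.map (fun x => ‖x‖)).prod with hA
  have hApos : 0 < A := normprod_pos (fun y hy => lt_trans hr (hv y hy))
  have hrs : (0:ℝ) < r ^ s := pow_pos hr s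
  rw [Q_add, coeff_mul]
  have hmem : ((s, 0) : ℕ × ℕ) ∈ Finset.HasAntidiagonal.antidiagonal s := by simp
  rw [Finset.sum_eq_add_sum_sdiff_singleton_of_mem hmem]
  have hbig : ‖(Q u).coeff s * (Q v).coeff 0‖ = A := by
    rw [norm_mul, Q_coeff_card, one_mul, coeff_zero_norm]
  rw [norm_add_eq_left, hbig]
  rw [hbig]
  refine norm_sum_lt hApos ?_
  rintro ⟨i, j⟩ hij
  simp only [Finset.mem_sdiff, Finset.HasAntidiagonal.mem_antidiagonal, Finset.mem_singleton] at hij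
  obtain ⟨hij1, hij2⟩ := hij
  have hj1 : 1 ≤ j := by
    rcases Nat.eq_zero_or_pos j with rfl | h
    · exfalso; apply hij2; simp at hij1 ⊢; omega
    · omega
  have key : ‖(Q u).coeff i * (Q v).coeff j‖ * r ^ s < A * r ^ s := by
    calc ‖(Q u).coeff i * (Q v).coeff j‖ * r ^ s
        = (‖(Q u).coeff i‖ * r ^ i) * (‖(Q v).coeff j‖ * r ^ j) := by
          rw [norm_mul, ← hij1, pow_add]; ring
      _ ≤ r ^ s * (‖(Q v).coeff j‖ * r ^ j) :=
          mul_le_mul_of_nonneg_right (L1_le hr hu i) (by positivity)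
      _ < r ^ s * A := mul_lt_mul_of_pos_left (L3s hr hv j hj1) hrs
      _ = A * r ^ s := by ring
  exact lt_of_mul_lt_mul_right key hrs.le

/-- Unique maximality of the critical coefficient when near-roots are strictly inside. -/
lemma uniqueMax {r : ℝ} (hr : 0 < r) {u v : Multiset k}
    (hu : ∀ x ∈ u, ‖x‖ < r) (hv : ∀ x ∈ v, r < ‖x‖) :
    ∀ j, j ≠ Multiset.card u →
      ‖(Q (u + v)).coeff j‖ * r ^ j
        < (v.map (fun x => ‖x‖)).prod * r ^ (Multiset.card u) := by
  classical
  intro j hj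
  set s := Multiset.card u with hs
  set A := (v.map (fun x => ‖x‖)).prod with hA
  have hApos : 0 < A := normprod_pos (fun y hy => lt_trans hr (hv y hy))
  have hrj : (0:ℝ) < r ^ j := pow_pos hr j
  have hrs : (0:ℝ) < r ^ s := pow_pos hr s
  have htarget : (0:ℝ) < A * r ^ s := by positivity
  rw [Q_add, coeff_mul]
  rw [← lt_div_iff₀ hrj]
  refine norm_sum_lt (by positivity) ?_
  rintro ⟨i, j'⟩ hij
  simp only [Finset.HasAntidiagonal.mem_antidiagonal] at hij
  rw [lt_div_iff₀ hrj]
  rcases le_or_gt i s with hi | hi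
  · -- i ≤ s
    have hterm : ‖(Q u).coeff i * (Q v).coeff j'‖ * r ^ j
        = (‖(Q u).coeff i‖ * r ^ i) * (‖(Q v).coeff j'‖ * r ^ j') := by
      rw [norm_mul, ← hij, pow_add]; ring
    rcases lt_or_gt_of_ne hj with hjs | hjs
    · -- j < s, so i ≤ j < s
      have hilt : i < s := lt_of_le_of_lt (by omega : i ≤ j) hjs
      calc ‖(Q u).coeff i * (Q v).coeff j'‖ * r ^ j
          = (‖(Q u).coeff i‖ * r ^ i) * (‖(Q v).coeff j'‖ * r ^ j') := hterm
        _ ≤ (‖(Q u).coeff i‖ * r ^ i) * A :=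
            mul_le_mul_of_nonneg_left (L1_ge hr (fun y hy => (hv y hy).le) j') (by positivity)
        _ < r ^ s * A := mul_lt_mul_of_pos_right (L1s hr hu i hilt) hApos
        _ = A * r ^ s := by ring
    · -- j > s, so j' ≥ 1
      have hj'1 : 1 ≤ j' := by omega
      calc ‖(Q u).coeff i * (Q v).coeff j'‖ * r ^ j
          = (‖(Q u).coeff i‖ * r ^ i) * (‖(Q v).coeff j'‖ * r ^ j') := hterm
        _ ≤ r ^ s * (‖(Q v).coeff j'‖ * r ^ j') :=
            mul_le_mul_of_nonneg_right (L1_le hr (fun y hy => (hu y hy).le) i) (by positivity)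
        _ < r ^ s * A := mul_lt_mul_of_pos_left (L3s hr hv j' hj'1) hrs
        _ = A * r ^ s := by ring
  · -- i > s: coefficient vanishes
    have : (Q u).coeff i = 0 := by
      apply coeff_eq_zero_of_natDegree_lt
      rw [Q_natDegree]; omega
    rw [this, zero_mul, norm_zero, zero_mul]
    exact htarget


lemma norm_sub_eq_right {α x : k} (h : ‖α‖ < ‖x‖) : ‖α - x‖ = ‖x‖ := by
  rw [sub_eq_add_neg, add_comm]
  rw [norm_add_eq_left (by simpa using h)]
  simp

lemma norm_eq_of_sub_lt {α β : k} (h : ‖α - β‖ < ‖α‖) : ‖β‖ = ‖α‖ := by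
  have hβ : β = α + -(α - β) := by ring
  rw [hβ, norm_add_eq_left (by rw [norm_neg]; exact h)]

lemma exists_min_multiset {m : Multiset k} (hm : m ≠ 0) (f : k → ℝ) :
    ∃ β ∈ m, ∀ x ∈ m, f β ≤ f x := by
  induction m using Multiset.induction_on with
  | empty => exact absurd rfl hm
  | cons y m ih =>
      rcases eq_or_ne m 0 with rfl | hm0
      · exact ⟨y, Multiset.mem_cons_self y 0, by
          intro x hx; rw [Multiset.mem_cons] at hx
          rcases hx with rfl | hx
          · exact le_refl _
          · simp at hx⟩
      · obtain ⟨β, hβm, hβ⟩ := ih hm0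
        rcases le_total (f y) (f β) with h | h
        · refine ⟨y, Multiset.mem_cons_self y m, ?_⟩
          intro x hx; rw [Multiset.mem_cons] at hx
          rcases hx with rfl | hx
          · exact le_refl _
          · exact h.trans (hβ x hx)
        · refine ⟨β, Multiset.mem_cons_of_mem hβm, ?_⟩
          intro x hx; rw [Multiset.mem_cons] at hx
          rcases hx with rfl | hx
          · exact h
          · exact hβ x hx

lemma pow_card_le_prod_multiset {m : Multiset k} {δ : ℝ} (hδ : 0 ≤ δ) {f : k → ℝ}
    (h : ∀ x ∈ m, δ ≤ f x) : δ ^ Multiset.card m ≤ (m.map f).prod := by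
  induction m using Multiset.induction_on with
  | empty => simp
  | cons y m ih =>
      simp only [Multiset.map_cons, Multiset.prod_cons, Multiset.card_cons, pow_succ]
      rw [mul_comm (δ ^ Multiset.card m) δ]
      exact mul_le_mul (h y (Multiset.mem_cons_self y m))
        (ih (fun x hx => h x (Multiset.mem_cons_of_mem hx)))
        (pow_nonneg hδ _)
        ((hδ.trans (h y (Multiset.mem_cons_self y m))))

lemma prodmax_eq_of_le {r : ℝ} {u : Multiset k} (hu : ∀ x ∈ u, ‖x‖ ≤ r) :
    (u.map (fun x => max r ‖x‖)).prod = r ^ Multiset.card u := by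
  rw [Multiset.map_congr rfl (fun x hx => max_eq_left (hu x hx)),
    Multiset.map_const', Multiset.prod_replicate]

lemma prodmax_eq_of_ge {r : ℝ} {v : Multiset k} (hv : ∀ x ∈ v, r ≤ ‖x‖) :
    (v.map (fun x => max r ‖x‖)).prod = (v.map (fun x => ‖x‖)).prod := by
  rw [Multiset.map_congr rfl (fun x hx => max_eq_right (hv x hx))]

section AlgClosed

variable [IsAlgClosed k]

lemma factor_poly {P : k[X]} (hP : P ≠ 0) :
    P = C P.leadingCoeff * Q P.roots ∧ Multiset.card P.roots = P.natDegree := by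
  have hsplit : P.Splits := IsAlgClosed.splits P
  constructor
  · exact (C_leadingCoeff_mul_prod_multiset_X_sub_C (splits_iff_card_roots.mp hsplit)).symm
  · exact (splits_iff_card_roots.mp hsplit)

lemma eval_norm_eq {P : k[X]} (hP : P ≠ 0) (α : k) :
    ‖P.eval α‖ = ‖P.leadingCoeff‖ * ((P.roots.map (fun x => ‖α - x‖)).prod) := by
  conv_lhs => rw [(factor_poly hP).1]
  rw [eval_mul, eval_C, norm_mul]
  congr 1
  rw [Q, eval_multiset_prod, Multiset.map_map]
  have h1 : Multiset.map (eval α ∘ fun x => X - C x) P.roots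
      = P.roots.map (fun x => α - x) := by
    apply Multiset.map_congr rfl
    intro x _
    simp
  rw [h1, norm_multiset_map_prod P.roots (fun x => α - x)]

/-- Fact A : existence of a root of norm exactly `r` when there are two
maximizing coefficient indices. -/
lemma factA {r M : ℝ} (hr : 0 < r) {P : k[X]} {m n : ℕ} (hmn : m ≠ n)
    (hM : 0 < M)
    (hall : ∀ j, ‖P.coeff j‖ * r ^ j ≤ M)
    (hm : ‖P.coeff m‖ * r ^ m = M) (hn : ‖P.coeff n‖ * r ^ n = M) :
    ∃ α : k, ‖α‖ = r ∧ P.eval α = 0 := by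
  classical
  have hP : P ≠ 0 := by
    intro h
    rw [h] at hn; simp at hn; linarith
  by_contra hcon
  push_neg at hcon
  obtain ⟨hfac, hcard⟩ := factor_poly hP
  set t := P.roots with ht
  set c := P.leadingCoeff with hc
  have hcpos : 0 < ‖c‖ := by
    rw [norm_pos_iff]; exact leadingCoeff_ne_zero.mpr hP
  set u := t.filter (fun x => ‖x‖ < r) with hu
  set v := t.filter (fun x => ¬ ‖x‖ < r) with hv
  have huv : u + v = t := Multiset.filter_add_not _ t
  have hu' : ∀ x ∈ u, ‖x‖ < r := fun x hx => (Multiset.mem_filter.mp hx).2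
  have hv' : ∀ x ∈ v, r < ‖x‖ := by
    intro x hx
    have h1 := (Multiset.mem_filter.mp hx).2
    have h2 : x ∈ t := (Multiset.mem_filter.mp hx).1
    have h3 : P.eval x = 0 := by
      rw [mem_roots hP] at h2; exact h2
    have h4 : ‖x‖ ≠ r := by
      intro h; exact (hcon x h) h3
    push_neg at h1
    exact lt_of_le_of_ne h1 (Ne.symm h4)
  set s := Multiset.card u with hs
  set A := (v.map (fun x => ‖x‖)).prod with hA
  -- coefficient of P at any j
  have hco : ∀ j, ‖P.coeff j‖ = ‖c‖ * ‖(Q t).coeff j‖ := by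
    intro j
    conv_lhs => rw [hfac]
    rw [coeff_C_mul, norm_mul]
  have hQs : ‖(Q t).coeff s‖ = A := by rw [← huv]; exact L2 hr (fun x hx => (hu' x hx).le) hv'
  have hsle : ‖P.coeff s‖ * r ^ s = ‖c‖ * A * r ^ s := by rw [hco, hQs]
  have humax : ∀ j, j ≠ s → ‖P.coeff j‖ * r ^ j < ‖c‖ * A * r ^ s := by
    intro j hjs
    have h0 := uniqueMax hr hu' hv' j (by rw [hs] at hjs; exact hjs)
    rw [huv, ← hA, ← hs] at h0
    calc ‖P.coeff j‖ * r ^ j = ‖c‖ * (‖(Q t).coeff j‖ * r ^ j) := by rw [hco]; ring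
      _ < ‖c‖ * (A * r ^ s) := mul_lt_mul_of_pos_left h0 hcpos
      _ = ‖c‖ * A * r ^ s := by ring
  have hkey : ∀ j, ‖P.coeff j‖ * r ^ j = M → j = s := by
    intro j hj
    by_contra hjs
    have h1 := humax j hjs
    rw [hj] at h1
    have h2 : ‖c‖ * A * r ^ s ≤ M := by rw [← hsle]; exact hall s
    linarith
  exact hmn ((hkey m hm).trans (hkey n hn).symm)

/-- Fact B : quantitative approximate root refinement. -/
lemma factB {r M : ℝ} (hr : 0 < r) {P : k[X]} {n : ℕ}
    (hM : 0 < M)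
    (hall : ∀ j, ‖P.coeff j‖ * r ^ j ≤ M)
    (hn : ‖P.coeff n‖ * r ^ n = M)
    (hhigh : ∀ j, n < j → ‖P.coeff j‖ * r ^ j < M)
    {α : k} (hα : ‖α‖ = r) (hev : ‖P.eval α‖ < M) :
    ∃ β : k, P.eval β = 0 ∧ ‖β‖ = r ∧ ‖α - β‖ ^ n * M ≤ ‖P.eval α‖ * r ^ n := by
  classical
  have hP : P ≠ 0 := by
    intro h
    rw [h] at hn; simp at hn; linarith
  obtain ⟨hfac, hcard⟩ := factor_poly hP
  set t := P.roots with ht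
  set c := P.leadingCoeff with hc
  have hcpos : 0 < ‖c‖ := by
    rw [norm_pos_iff]; exact leadingCoeff_ne_zero.mpr hP
  set u := t.filter (fun x => ‖x‖ ≤ r) with hu
  set v := t.filter (fun x => ¬ ‖x‖ ≤ r) with hv
  have huv : u + v = t := Multiset.filter_add_not _ t
  have hu' : ∀ x ∈ u, ‖x‖ ≤ r := fun x hx => (Multiset.mem_filter.mp hx).2
  have hv' : ∀ x ∈ v, r < ‖x‖ := by
    intro x hx
    have h1 := (Multiset.mem_filter.mp hx).2
    push_neg at h1; exact h1
  set s := Multiset.card u with hs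
  set A := (v.map (fun x => ‖x‖)).prod with hA
  have hApos : 0 < A := normprod_pos (fun y hy => lt_trans hr (hv' y hy))
  have hco : ∀ j, ‖P.coeff j‖ = ‖c‖ * ‖(Q t).coeff j‖ := by
    intro j
    conv_lhs => rw [hfac]
    rw [coeff_C_mul, norm_mul]
  -- M ≤ ‖c‖ * r^s * A  via L1
  have hL1 : M ≤ ‖c‖ * A * r ^ s := by
    have h1 := L1 hr t n
    have h2 : (t.map (fun x => max r ‖x‖)).prod = r ^ s * A := by
      rw [← huv, Multiset.map_add, Multiset.prod_add, prodmax_eq_of_le hu',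
        prodmax_eq_of_ge (fun x hx => (hv' x hx).le)]
    rw [h2] at h1
    calc M = ‖P.coeff n‖ * r ^ n := hn.symm
      _ = ‖c‖ * (‖(Q t).coeff n‖ * r ^ n) := by rw [hco]; ring
      _ ≤ ‖c‖ * (r ^ s * A) := mul_le_mul_of_nonneg_left h1 hcpos.le
      _ = ‖c‖ * A * r ^ s := by ring
  -- equality at s, and s ≤ n
  have hQs : ‖(Q t).coeff s‖ = A := by rw [← huv]; exact L2 hr hu' hv'
  have hseq : ‖P.coeff s‖ * r ^ s = ‖c‖ * A * r ^ s := by rw [hco, hQs]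
  have hMeq : ‖c‖ * A * r ^ s = M := le_antisymm (by rw [← hseq]; exact hall s) hL1
  have hsn : s ≤ n := by
    by_contra hcon
    push_neg at hcon
    have := hhigh s hcon
    rw [hseq, hMeq] at this
    exact lt_irrefl _ this
  -- eval norm decomposition
  have heval : ‖P.eval α‖ = ‖c‖ * ((u.map (fun x => ‖α - x‖)).prod) * A := by
    rw [eval_norm_eq hP α, ← ht, ← huv, Multiset.map_add, Multiset.prod_add]
    have : (v.map (fun x => ‖α - x‖)) = v.map (fun x => ‖x‖) :=
      Multiset.map_congr rfl (fun x hx => norm_sub_eq_right (by rw [hα]; exact hv' x hx))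
    rw [this, ← hA]
    ring
  -- u is nonempty
  have hune : u ≠ 0 := by
    intro h0
    rw [h0] at hs
    simp at hs
    rw [h0] at heval
    simp at heval
    rw [hs] at hMeq
    simp at hMeq
    rw [heval, hMeq] at hev
    exact lt_irrefl _ hev
  obtain ⟨β, hβu, hβmin⟩ := exists_min_multiset hune (fun x => ‖α - x‖)
  have hβt : β ∈ t := by
    rw [← huv]; exact Multiset.mem_add.mpr (Or.inl hβu)
  have hβroot : P.eval β = 0 := by
    exact (mem_roots hP).mp hβt
  set δ := ‖α - β‖ with hδ
  have hδnn : 0 ≤ δ := norm_nonneg _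
  have hδle : δ ≤ r := by
    rw [hδ]
    refine le_trans (nsub α β) ?_
    rw [hα]
    exact max_le (le_refl r) (hu' β hβu)
  -- lower bound for the evaluation
  have hlow : ‖c‖ * A * δ ^ s ≤ ‖P.eval α‖ := by
    rw [heval]
    have h1 : δ ^ s ≤ ((u.map (fun x => ‖α - x‖)).prod) :=
      pow_card_le_prod_multiset hδnn hβmin
    calc ‖c‖ * A * δ ^ s ≤ ‖c‖ * A * ((u.map (fun x => ‖α - x‖)).prod) :=
          mul_le_mul_of_nonneg_left h1 (by positivity)
      _ = ‖c‖ * ((u.map (fun x => ‖α - x‖)).prod) * A := by ring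
  -- conclusion inequality
  have hkey : δ ^ n * M ≤ ‖P.eval α‖ * r ^ n := by
    have h1 : δ ^ n * M = (δ ^ (n - s) * δ ^ s) * (‖c‖ * A * r ^ s) := by
      rw [← pow_add, Nat.sub_add_cancel hsn, hMeq]
    rw [h1]
    calc (δ ^ (n - s) * δ ^ s) * (‖c‖ * A * r ^ s)
        ≤ (r ^ (n - s) * δ ^ s) * (‖c‖ * A * r ^ s) := by
          apply mul_le_mul_of_nonneg_right _ (by positivity)
          exact mul_le_mul_of_nonneg_right (pow_le_pow_left₀ hδnn hδle _) (by positivity)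
      _ = (‖c‖ * A * δ ^ s) * (r ^ (n - s) * r ^ s) := by ring
      _ = (‖c‖ * A * δ ^ s) * r ^ n := by rw [← pow_add, Nat.sub_add_cancel hsn]
      _ ≤ ‖P.eval α‖ * r ^ n := mul_le_mul_of_nonneg_right hlow (by positivity)
  refine ⟨β, hβroot, ?_, hkey⟩
  -- ‖β‖ = r
  have hδr : δ < r := by
    by_contra hge
    push_neg at hge
    have : r ^ n * M ≤ δ ^ n * M :=
      mul_le_mul_of_nonneg_right (pow_le_pow_left₀ hr.le hge n) hM.le
    have h2 : r ^ n * M ≤ ‖P.eval α‖ * r ^ n := le_trans this hkey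
    have h3 : M ≤ ‖P.eval α‖ := by
      have hrn : (0:ℝ) < r ^ n := pow_pos hr n
      nlinarith
    linarith
  rw [← hα]
  exact norm_eq_of_sub_lt (by rw [hα]; exact hδr)

end AlgClosed


/-- Monotonicity of term ratios: if the `p`-term dominates the `j`-term (`j ≤ p`) at radius
`r₀`, it still dominates at any larger radius. -/
lemma ratio_mono {a c r₀ r : ℝ} (h0 : 0 < r₀) (hr : r₀ ≤ r) {j p : ℕ} (hjp : j ≤ p)
    (hc : 0 ≤ c) (h : a * r₀ ^ j ≤ c * r₀ ^ p) : a * r ^ j ≤ c * r ^ p := by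
  have hrpos : 0 < r := lt_of_lt_of_le h0 hr
  have hkey : a * r ^ j * r₀ ^ p ≤ c * r ^ p * r₀ ^ p := by
    calc a * r ^ j * r₀ ^ p = (a * r₀ ^ j) * (r ^ j * r₀ ^ (p - j)) := by
          rw [show r₀ ^ p = r₀ ^ j * r₀ ^ (p - j) by rw [← pow_add, Nat.add_sub_cancel' hjp]]
          ring
      _ ≤ (c * r₀ ^ p) * (r ^ j * r₀ ^ (p - j)) := by
          apply mul_le_mul_of_nonneg_right h (by positivity)
      _ ≤ (c * r₀ ^ p) * (r ^ j * r ^ (p - j)) := by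
          apply mul_le_mul_of_nonneg_left
            (mul_le_mul_of_nonneg_left (pow_le_pow_left₀ h0.le hr _) (by positivity))
            (by positivity)
      _ = c * r ^ p * r₀ ^ p := by
          rw [show r ^ j * r ^ (p - j) = r ^ p by rw [← pow_add, Nat.add_sub_cancel' hjp]]
          ring
  exact le_of_mul_le_mul_right hkey (pow_pos h0 p)

lemma cont_sup' {D : Finset ℕ} (hD : D.Nonempty) (f : ℕ → ℝ → ℝ)
    (hf : ∀ j, Continuous (f j)) : Continuous (fun r => D.sup' hD (fun j => f j r)) := by
  induction hD using Finset.Nonempty.cons_induction with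
  | singleton j => simpa using hf j
  | cons j t hj ht ih =>
      have heq : (fun r => (Finset.cons j t hj).sup' (Finset.cons_nonempty hj) (fun i => f i r))
          = fun r => max (f j r) (t.sup' ht (fun i => f i r)) := by
        funext r
        rw [Finset.sup'_cons ht]
      rw [heq]
      exact Continuous.max (hf j) ih

/-- Step 1: existence of a critical radius beyond `R` with two maximizing indices. -/
lemma critical_radius {b : ℕ → k}
    (htend : ∀ r : ℝ, 0 < r → Tendsto (fun j : ℕ => ‖b j‖ * r ^ j) atTop (nhds 0))
    (hinf : ∀ N : ℕ, ∃ j : ℕ, N ≤ j ∧ b j ≠ 0) (R : ℝ) (hR : 0 < R) :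
    ∃ r : ℝ, R < r ∧ 0 < r ∧ ∃ m n : ℕ, m < n ∧
      ‖b m‖ * r ^ m = ‖b n‖ * r ^ n ∧ 0 < ‖b n‖ * r ^ n ∧
      (∀ j, ‖b j‖ * r ^ j ≤ ‖b n‖ * r ^ n) ∧
      (∀ j, n < j → ‖b j‖ * r ^ j < ‖b n‖ * r ^ n) := by
  classical
  set r₀ : ℝ := R + 1 with hr₀def
  have hr₀1 : 1 < r₀ := by rw [hr₀def]; linarith
  have hr₀ : 0 < r₀ := by linarith
  -- a nonzero coefficient
  obtain ⟨j₁, hj₁ge, hj₁ne⟩ := hinf 1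
  have hε₁ : 0 < ‖b j₁‖ * r₀ ^ j₁ := by
    apply mul_pos (norm_pos_iff.mpr hj₁ne) (pow_pos hr₀ _)
  -- tail bound at r₀
  obtain ⟨J, hJ⟩ := Filter.eventually_atTop.mp
    ((htend r₀ hr₀).eventually_lt_const hε₁)
  have hj₁J : j₁ < J := by
    by_contra hcon
    push_neg at hcon
    exact lt_irrefl _ (hJ j₁ hcon)
  have hJne : (Finset.range J).Nonempty := ⟨j₁, Finset.mem_range.mpr hj₁J⟩
  set V := (Finset.range J).sup' hJne (fun j => ‖b j‖ * r₀ ^ j) with hV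
  have hVε₁ : ‖b j₁‖ * r₀ ^ j₁ ≤ V :=
    Finset.le_sup' (fun j => ‖b j‖ * r₀ ^ j) (Finset.mem_range.mpr hj₁J)
  have hVpos : 0 < V := lt_of_lt_of_le hε₁ hVε₁
  -- the largest maximizer p at radius r₀
  set E₀ := (Finset.range J).filter (fun j => ‖b j‖ * r₀ ^ j = V) with hE₀
  have hE₀ne : E₀.Nonempty := by
    obtain ⟨i, hi, hieq⟩ := Finset.exists_mem_eq_sup' hJne (fun j => ‖b j‖ * r₀ ^ j)
    exact ⟨i, Finset.mem_filter.mpr ⟨hi, hieq.symm⟩⟩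
  set p := E₀.max' hE₀ne with hp
  have hpE₀ : p ∈ E₀ := E₀.max'_mem hE₀ne
  have hpV : ‖b p‖ * r₀ ^ p = V := (Finset.mem_filter.mp hpE₀).2
  have hble : ∀ j, ‖b j‖ * r₀ ^ j ≤ V := by
    intro j
    rcases lt_or_ge j J with h | h
    · exact Finset.le_sup' (fun i => ‖b i‖ * r₀ ^ i) (Finset.mem_range.mpr h)
    · exact (hJ j h).le.trans hVε₁
  have hblt : ∀ j, p < j → ‖b j‖ * r₀ ^ j < V := by
    intro j hpj
    rcases lt_or_ge j J with h | h
    · rcases lt_or_eq_of_le (hble j) with h' | h'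
      · exact h'
      · exfalso
        have : j ∈ E₀ := Finset.mem_filter.mpr ⟨Finset.mem_range.mpr h, h'⟩
        exact absurd (E₀.le_max' j this) (by omega)
    · exact lt_of_lt_of_le (hJ j h) hVε₁
  have hbp : b p ≠ 0 := by
    intro h
    rw [h] at hpV; simp at hpV; rw [← hpV] at hVpos; exact lt_irrefl _ hVpos
  have hbppos : 0 < ‖b p‖ := norm_pos_iff.mpr hbp
  -- a later nonzero coefficient
  obtain ⟨q, hqge, hqne⟩ := hinf (p + 1)
  have hpq : p < q := hqge
  have hbqpos : 0 < ‖b q‖ := norm_pos_iff.mpr hqne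
  -- radius where q-term overtakes p-term
  set r₂ : ℝ := max r₀ (1 + ‖b p‖ / ‖b q‖) with hr₂def
  have hr₂r₀ : r₀ ≤ r₂ := le_max_left _ _
  have hr₂1 : 1 < r₂ := lt_of_lt_of_le hr₀1 hr₂r₀
  have hr₂pos : 0 < r₂ := by linarith
  have hovertake : ‖b p‖ * r₂ ^ p ≤ ‖b q‖ * r₂ ^ q := by
    have h1 : r₂ ^ (q - p) ≥ r₂ := by
      apply le_self_pow₀ hr₂1.le (by omega)
    have h2 : ‖b p‖ / ‖b q‖ < r₂ := lt_of_lt_of_le (by linarith [le_max_right r₀ (1 + ‖b p‖ / ‖b q‖)]) (le_refl r₂) |>.trans_le (le_refl _)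
    have h3 : ‖b p‖ < ‖b q‖ * r₂ ^ (q - p) := by
      rw [div_lt_iff₀ hbqpos] at h2
      calc ‖b p‖ < r₂ * ‖b q‖ := h2
        _ ≤ r₂ ^ (q - p) * ‖b q‖ := mul_le_mul_of_nonneg_right h1 hbqpos.le
        _ = ‖b q‖ * r₂ ^ (q - p) := by ring
    calc ‖b p‖ * r₂ ^ p ≤ (‖b q‖ * r₂ ^ (q - p)) * r₂ ^ p :=
          mul_le_mul_of_nonneg_right h3.le (by positivity)
      _ = ‖b q‖ * r₂ ^ q := by
          rw [mul_assoc, ← pow_add, Nat.sub_add_cancel hpq.le]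
  -- tail bound at r₂, relative to V
  obtain ⟨Q₀, hQ₀⟩ := Filter.eventually_atTop.mp
    ((htend r₂ hr₂pos).eventually_lt_const hVpos)
  set Q' : ℕ := Q₀ + q + p + 1 with hQ'
  set D := Finset.Ioc p Q' with hD
  have hqD : q ∈ D := Finset.mem_Ioc.mpr ⟨hpq, by omega⟩
  have hDne : D.Nonempty := ⟨q, hqD⟩
  set F : ℝ → ℝ := fun r => D.sup' hDne (fun j => ‖b j‖ * r ^ j) with hF
  have hFcont : Continuous F :=
    cont_sup' hDne _ (fun j => continuous_const.mul (continuous_pow j))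
  have hgcont : Continuous (fun r : ℝ => ‖b p‖ * r ^ p) :=
    continuous_const.mul (continuous_pow p)
  -- the set where F overtakes the p-term
  set S : Set ℝ := {r | r ∈ Set.Icc r₀ r₂ ∧ ‖b p‖ * r ^ p ≤ F r} with hS
  have hSclosed : IsClosed S := by
    apply IsClosed.inter isClosed_Icc
    exact isClosed_le hgcont hFcont
  have hr₂S : r₂ ∈ S := by
    refine ⟨⟨hr₂r₀, le_refl _⟩, ?_⟩
    exact le_trans hovertake (Finset.le_sup' (fun j => ‖b j‖ * r₂ ^ j) hqD)
  have hSne : S.Nonempty := ⟨r₂, hr₂S⟩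
  have hSbdd : BddBelow S := ⟨r₀, fun x hx => hx.1.1⟩
  set r := sInf S with hrdef
  have hrS : r ∈ S := hSclosed.csInf_mem hSne hSbdd
  have hrIcc : r ∈ Set.Icc r₀ r₂ := hrS.1
  have hrFle : ‖b p‖ * r ^ p ≤ F r := hrS.2
  have hrpos : 0 < r := lt_of_lt_of_le hr₀ hrIcc.1
  -- r₀ is not in S
  have hr₀S : r₀ ∉ S := by
    intro h
    have h1 : F r₀ < ‖b p‖ * r₀ ^ p := by
      rw [hpV]
      apply (Finset.sup'_lt_iff hDne).mpr
      intro j hj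
      exact hblt j (Finset.mem_Ioc.mp hj).1
    exact absurd h.2 (not_le.mpr h1)
  have hrr₀ : r₀ < r := lt_of_le_of_ne hrIcc.1 (fun h => hr₀S (h ▸ hrS))
  -- minimality gives equality F r = ‖b p‖ r^p
  have hreq : F r = ‖b p‖ * r ^ p := by
    by_contra hne
    have hlt : ‖b p‖ * r ^ p < F r := lt_of_le_of_ne hrFle (Ne.symm hne)
    set φ := fun x : ℝ => F x - ‖b p‖ * x ^ p with hφ
    have hφcont : Continuous φ := hFcont.sub hgcont
    have hφr : 0 < φ r := by simp [hφ]; linarith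
    have hopen : IsOpen (φ ⁻¹' Set.Ioi 0) := isOpen_Ioi.preimage hφcont
    obtain ⟨δ, hδpos, hδ⟩ := Metric.isOpen_iff.mp hopen r hφr
    set r' := max ((r₀ + r) / 2) (r - δ / 2) with hr'def
    have hr'r : r' < r := by
      apply max_lt
      · linarith
      · linarith
    have hr'r₀ : r₀ < r' := lt_of_lt_of_le (by linarith) (le_max_left _ _)
    have hr'ball : r' ∈ Metric.ball r δ := by
      rw [Metric.mem_ball, Real.dist_eq, abs_lt]
      constructor
      · have : r - δ / 2 ≤ r' := le_max_right _ _
        linarith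
      · linarith
    have hφr' : 0 < φ r' := hδ hr'ball
    have hr'S : r' ∈ S := by
      refine ⟨⟨hr'r₀.le, le_trans hr'r.le hrIcc.2⟩, ?_⟩
      simp [hφ] at hφr'
      linarith
    exact absurd (csInf_le hSbdd hr'S) (not_le.mpr hr'r)
  -- the global max M at radius r
  set M := ‖b p‖ * r ^ p with hM
  have hMpos : 0 < M := by positivity
  have hall : ∀ j, ‖b j‖ * r ^ j ≤ M := by
    intro j
    rcases le_or_gt j p with h | h
    · exact ratio_mono hr₀ hrIcc.1 h (norm_nonneg _) (by rw [hpV]; exact hble j)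
    · rcases le_or_gt j Q' with h' | h'
      · exact le_trans (Finset.le_sup' (fun i => ‖b i‖ * r ^ i)
          (Finset.mem_Ioc.mpr ⟨h, h'⟩)) (le_of_eq hreq)
      · have h1 : ‖b j‖ * r ^ j ≤ ‖b j‖ * r₂ ^ j :=
          mul_le_mul_of_nonneg_left (pow_le_pow_left₀ hrpos.le hrIcc.2 _) (norm_nonneg _)
        have h2 : ‖b j‖ * r₂ ^ j < V := hQ₀ j (by omega)
        have h3 : V ≤ M := by
          rw [← hpV, hM]
          exact mul_le_mul_of_nonneg_left (pow_le_pow_left₀ hr₀.le hrIcc.1 p) (norm_nonneg _)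
        linarith
  have hstrictQ' : ∀ j, Q' < j → ‖b j‖ * r ^ j < M := by
    intro j hj
    have h1 : ‖b j‖ * r ^ j ≤ ‖b j‖ * r₂ ^ j :=
      mul_le_mul_of_nonneg_left (pow_le_pow_left₀ hrpos.le hrIcc.2 _) (norm_nonneg _)
    have h2 : ‖b j‖ * r₂ ^ j < V := hQ₀ j (by omega)
    have h3 : V ≤ M := by
      rw [← hpV, hM]
      exact mul_le_mul_of_nonneg_left (pow_le_pow_left₀ hr₀.le hrIcc.1 p) (norm_nonneg _)
    linarith
  -- the largest maximizer n in D
  set E := D.filter (fun j => ‖b j‖ * r ^ j = M) with hE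
  have hEne : E.Nonempty := by
    obtain ⟨i, hi, hieq⟩ := Finset.exists_mem_eq_sup' hDne (fun j => ‖b j‖ * r ^ j)
    refine ⟨i, Finset.mem_filter.mpr ⟨hi, ?_⟩⟩
    rw [← hieq]
    exact hreq
  set n := E.max' hEne with hn
  have hnE : n ∈ E := E.max'_mem hEne
  have hnD : n ∈ D := (Finset.mem_filter.mp hnE).1
  have hnM : ‖b n‖ * r ^ n = M := (Finset.mem_filter.mp hnE).2
  have hpn : p < n := (Finset.mem_Ioc.mp hnD).1
  have hstrict : ∀ j, n < j → ‖b j‖ * r ^ j < M := by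
    intro j hj
    rcases le_or_gt j Q' with h' | h'
    · have hjD : j ∈ D := Finset.mem_Ioc.mpr ⟨lt_trans hpn hj, h'⟩
      rcases lt_or_eq_of_le (hall j) with h | h
      · exact h
      · exfalso
        have : j ∈ E := Finset.mem_filter.mpr ⟨hjD, h⟩
        exact absurd (E.le_max' j this) (by omega)
    · exact hstrictQ' j h'
  refine ⟨r, by linarith [hrr₀], hrpos, p, n, hpn, ?_, ?_, ?_, ?_⟩
  · rw [hnM]
  · rw [hnM]; exact hMpos
  · intro j; rw [hnM]; exact hall j
  · intro j hj; rw [hnM]; exact hstrict j hj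


section Main

variable [CompleteSpace k]

lemma summable_of_norm_tendsto {f : ℕ → k}
    (h : Tendsto (fun j => ‖f j‖) atTop (nhds 0)) : Summable f := by
  apply NonarchimedeanAddGroup.summable_of_tendsto_cofinite_zero
  rw [Nat.cofinite_eq_atTop]
  exact tendsto_zero_iff_norm_tendsto_zero.mpr h

/-- Bound for differences of powers. -/
lemma pow_sub_pow_bound {z α : k} {r : ℝ} (hz : ‖z‖ ≤ r) (hα : ‖α‖ ≤ r) :
    ∀ j : ℕ, ‖z ^ j - α ^ j‖ * r ≤ ‖z - α‖ * r ^ j := by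
  have hr : 0 ≤ r := le_trans (norm_nonneg _) hz
  intro j
  induction j with
  | zero => simp [norm_nonneg]
  | succ j ih =>
      have hdecomp : z ^ (j+1) - α ^ (j+1) = z * (z ^ j - α ^ j) + (z - α) * α ^ j := by
        ring
      have h1 : ‖z ^ (j+1) - α ^ (j+1)‖
          ≤ max (‖z‖ * ‖z ^ j - α ^ j‖) (‖z - α‖ * ‖α‖ ^ j) := by
        rw [hdecomp]
        refine le_trans (IsUltrametricDist.norm_add_le_max _ _) ?_
        apply max_le_max
        · rw [norm_mul]
        · rw [norm_mul, norm_pow]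
      calc ‖z ^ (j+1) - α ^ (j+1)‖ * r
          ≤ max (‖z‖ * ‖z ^ j - α ^ j‖) (‖z - α‖ * ‖α‖ ^ j) * r :=
            mul_le_mul_of_nonneg_right h1 hr
        _ = max (‖z‖ * ‖z ^ j - α ^ j‖ * r) (‖z - α‖ * ‖α‖ ^ j * r) := by
            rw [max_mul_of_nonneg _ _ hr]
        _ ≤ ‖z - α‖ * r ^ (j+1) := by
            apply max_le
            · calc ‖z‖ * ‖z ^ j - α ^ j‖ * r = ‖z‖ * (‖z ^ j - α ^ j‖ * r) := by ring
                _ ≤ r * (‖z - α‖ * r ^ j) := by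
                    apply mul_le_mul hz ih (by positivity) hr
                _ = ‖z - α‖ * r ^ (j+1) := by ring
            · calc ‖z - α‖ * ‖α‖ ^ j * r ≤ ‖z - α‖ * r ^ j * r := by
                    apply mul_le_mul_of_nonneg_right _ hr
                    exact mul_le_mul_of_nonneg_left (pow_le_pow_left₀ (norm_nonneg _) hα j)
                      (norm_nonneg _)
                _ = ‖z - α‖ * r ^ (j+1) := by ring

/-- Main lemma: a nonzero everywhere-convergent power series with infinitely many nonzero
coefficients has zeros of arbitrarily large norm. -/
lemma exists_large_zero [IsAlgClosed k] {b : ℕ → k}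
    (htend : ∀ r : ℝ, 0 < r → Tendsto (fun j : ℕ => ‖b j‖ * r ^ j) atTop (nhds 0))
    (hinf : ∀ N : ℕ, ∃ j : ℕ, N ≤ j ∧ b j ≠ 0) {R : ℝ} (hR : 0 < R) :
    ∃ z : k, R < ‖z‖ ∧ (∑' j : ℕ, b j * z ^ j) = 0 := by
  classical
  obtain ⟨r, hRr, hrpos, m, n, hmn, hmM, hMpos, hall, hstrict⟩ := critical_radius htend hinf R hR
  set M := ‖b n‖ * r ^ n with hMdef
  -- truncated polynomials
  set P : ℕ → k[X] := fun N => ∑ j ∈ Finset.range (N+1), C (b j) * X ^ j with hPdef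
  have hPcoeff : ∀ N i, (P N).coeff i = if i ≤ N then b i else 0 := by
    intro N i
    rw [hPdef]
    rw [finset_sum_coeff]
    simp only [coeff_C_mul, coeff_X_pow, mul_ite, mul_one, mul_zero]
    simp [Finset.sum_ite_eq, Nat.lt_succ_iff]
  have hPeval : ∀ N (z : k), (P N).eval z = ∑ j ∈ Finset.range (N+1), b j * z ^ j := by
    intro N z
    rw [hPdef, eval_finset_sum]
    simp
  -- hypotheses of factB for each N ≥ n
  have hallP : ∀ N j, ‖(P N).coeff j‖ * r ^ j ≤ M := by
    intro N j
    rw [hPcoeff]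
    split
    · exact hall j
    · simpa using hMpos.le
  have hnP : ∀ N, n ≤ N → ‖(P N).coeff n‖ * r ^ n = M := by
    intro N hN
    rw [hPcoeff]
    simp [hN, hMdef]
  have hhighP : ∀ N j, n < j → ‖(P N).coeff j‖ * r ^ j < M := by
    intro N j hj
    rw [hPcoeff]
    split
    · exact hstrict j hj
    · simpa using hMpos
  -- initial root via Fact A
  obtain ⟨α₀, hα₀norm, hα₀eval⟩ : ∃ α : k, ‖α‖ = r ∧ (P n).eval α = 0 := by
    apply factA hrpos (ne_of_lt hmn) hMpos (hallP n) _ (hnP n (le_refl n))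
    rw [hPcoeff]
    simp [hmn.le, hmM]
  -- the refinement step
  have hstep : ∀ (i : ℕ) (α : k), ‖α‖ = r → (P (n+i)).eval α = 0 →
      ∃ β : k, (P (n+i+1)).eval β = 0 ∧ ‖β‖ = r ∧
        ‖α - β‖ ^ n * M ≤ (‖b (n+i+1)‖ * r ^ (n+i+1)) * r ^ n := by
    intro i α hαnorm hαeval
    have hev : (P (n+i+1)).eval α = b (n+i+1) * α ^ (n+i+1) := by
      rw [hPeval, Finset.sum_range_succ, ← hPeval, hαeval, zero_add]
    have hevnorm : ‖(P (n+i+1)).eval α‖ = ‖b (n+i+1)‖ * r ^ (n+i+1) := by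
      rw [hev, norm_mul, norm_pow, hαnorm]
    have hevlt : ‖(P (n+i+1)).eval α‖ < M := by
      rw [hevnorm]
      exact hstrict _ (by omega)
    obtain ⟨β, hβeval, hβnorm, hβineq⟩ :=
      factB hrpos hMpos (hallP (n+i+1)) (hnP (n+i+1) (by omega)) (hhighP (n+i+1)) hαnorm hevlt
    exact ⟨β, hβeval, hβnorm, by rwa [hevnorm] at hβineq⟩
  -- build the sequence
  choose g hg1 hg2 hg3 using hstep
  let T : ℕ → Type _ := fun i => {x : k // ‖x‖ = r ∧ (P (n+i)).eval x = 0}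
  let base : T 0 := ⟨α₀, hα₀norm, hα₀eval⟩
  let step : ∀ i, T i → T (i+1) := fun i x =>
    ⟨g i x.1 x.2.1 x.2.2, hg2 i x.1 x.2.1 x.2.2, hg1 i x.1 x.2.1 x.2.2⟩
  let A : ∀ i, T i := fun i => Nat.rec base step i
  set α : ℕ → k := fun i => (A i).1 with hαdef
  have hαnorm : ∀ i, ‖α i‖ = r := fun i => (A i).2.1
  have hαeval : ∀ i, (P (n+i)).eval (α i) = 0 := fun i => (A i).2.2
  have hαineq : ∀ i, ‖α i - α (i+1)‖ ^ n * M ≤ (‖b (n+i+1)‖ * r ^ (n+i+1)) * r ^ n := by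
    intro i
    exact hg3 i (A i).1 (A i).2.1 (A i).2.2
  have hn1 : 1 ≤ n := by omega
  -- consecutive distances tend to zero
  have hdist0 : Tendsto (fun i => ‖α i - α (i+1)‖) atTop (nhds 0) := by
    rw [Metric.tendsto_atTop]
    intro ε hε
    have hεn : 0 < ε ^ n * M / r ^ n := by positivity
    have htail := Filter.eventually_atTop.mp ((htend r hrpos).eventually_lt_const hεn)
    obtain ⟨J, hJ⟩ := htail
    refine ⟨J, fun i hi => ?_⟩
    rw [Real.dist_eq, sub_zero, abs_of_nonneg (norm_nonneg _)]
    have h1 := hαineq i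
    have h2 : ‖b (n+i+1)‖ * r ^ (n+i+1) < ε ^ n * M / r ^ n := hJ (n+i+1) (by omega)
    have h3 : ‖α i - α (i+1)‖ ^ n * M < ε ^ n * M := by
      calc ‖α i - α (i+1)‖ ^ n * M ≤ (‖b (n+i+1)‖ * r ^ (n+i+1)) * r ^ n := h1
        _ < (ε ^ n * M / r ^ n) * r ^ n := by
            apply mul_lt_mul_of_pos_right h2 (by positivity)
        _ = ε ^ n * M := by field_simp
    have h4 : ‖α i - α (i+1)‖ ^ n < ε ^ n := lt_of_mul_lt_mul_right h3 hMpos.le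
    exact lt_of_pow_lt_pow_left₀ n hε.le h4
  -- Cauchy
  have hcauchy : CauchySeq α := by
    rw [Metric.cauchySeq_iff']
    intro ε hε
    rw [Metric.tendsto_atTop] at hdist0
    obtain ⟨I, hI⟩ := hdist0 ε hε
    refine ⟨I, fun j hj => ?_⟩
    induction j, hj using Nat.le_induction with
    | base => simpa using hε
    | succ j hj ih =>
        have h1 : dist (α (j+1)) (α I) ≤ max (dist (α (j+1)) (α j)) (dist (α j) (α I)) :=
          IsUltrametricDist.dist_triangle_max _ _ _
        have h2 : dist (α (j+1)) (α j) < ε := by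
          rw [dist_eq_norm, ← norm_neg]
          have := hI j (by omega)
          rw [Real.dist_eq, sub_zero, abs_of_nonneg (norm_nonneg _)] at this
          simpa [neg_sub] using this
        exact lt_of_le_of_lt h1 (max_lt h2 ih)
  obtain ⟨z, hz⟩ := cauchySeq_tendsto_of_complete hcauchy
  have hznorm : ‖z‖ = r := by
    have h1 : Tendsto (fun i => ‖α i‖) atTop (nhds ‖z‖) := hz.norm
    have h2 : Tendsto (fun i => ‖α i‖) atTop (nhds r) := by
      have : (fun i => ‖α i‖) = fun _ => r := funext hαnorm
      rw [this]
      exact tendsto_const_nhds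
    exact tendsto_nhds_unique h1 h2
  have hzr : R < ‖z‖ := by rw [hznorm]; exact hRr
  refine ⟨z, hzr, ?_⟩
  -- summability
  have hsummable : Summable (fun j => b j * z ^ j) := by
    apply summable_of_norm_tendsto
    have : (fun j => ‖b j * z ^ j‖) = fun j => ‖b j‖ * r ^ j := by
      funext j
      rw [norm_mul, norm_pow, hznorm]
    rw [this]
    exact htend r hrpos
  -- the sum is zero
  have hkey : ∀ ε : ℝ, 0 < ε → ‖∑' j, b j * z ^ j‖ ≤ ε := by
    intro ε hε
    -- choose i large
    obtain ⟨J, hJ⟩ := Filter.eventually_atTop.mp ((htend r hrpos).eventually_lt_const hε)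
    have hδ : 0 < ε * r / M := by positivity
    have hαz := Metric.tendsto_atTop.mp hz
    obtain ⟨I, hI⟩ := hαz (ε * r / M) hδ
    set i := max I J with hidef
    set N := n + i with hNdef
    have hzα : ‖z - α i‖ < ε * r / M := by
      have := hI i (le_max_left _ _)
      rw [dist_comm, dist_eq_norm] at this
      exact this
    -- decompose the sum
    have hdecomp := Summable.sum_add_tsum_nat_add (f := fun j => b j * z ^ j) (N+1) hsummable
    rw [← hdecomp]
    refine le_trans (IsUltrametricDist.norm_add_le_max _ _) (max_le ?_ ?_)
    · -- head: equals eval of P N at z, compare with eval at α i which is 0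
      have hhead : ∑ j ∈ Finset.range (N+1), b j * z ^ j = (P N).eval z := (hPeval N z).symm
      rw [hhead]
      have hdiff : (P N).eval z = (P N).eval z - (P N).eval (α i) := by
        rw [hαeval i, sub_zero]
      rw [hdiff, hPeval, hPeval]
      rw [← Finset.sum_sub_distrib]
      have hterm : ∀ j ∈ Finset.range (N+1),
          ‖b j * z ^ j - b j * (α i) ^ j‖ ≤ ε := by
        intro j _
        have h1 : b j * z ^ j - b j * (α i) ^ j = b j * (z ^ j - (α i) ^ j) := by ring
        rw [h1, norm_mul]
        have h2 : ‖z ^ j - (α i) ^ j‖ * r ≤ ‖z - α i‖ * r ^ j :=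
          pow_sub_pow_bound (le_of_eq hznorm) (le_of_eq (hαnorm i)) j
        -- ‖b j‖ * ‖z^j - α^j‖ * r ≤ ‖b j‖ * ‖z-α‖ * r^j ≤ ‖z-α‖ * M ≤ ε * r
        have h3 : ‖b j‖ * ‖z ^ j - (α i) ^ j‖ * r ≤ ε * r := by
          calc ‖b j‖ * ‖z ^ j - (α i) ^ j‖ * r = ‖b j‖ * (‖z ^ j - (α i) ^ j‖ * r) := by ring
            _ ≤ ‖b j‖ * (‖z - α i‖ * r ^ j) :=
                mul_le_mul_of_nonneg_left h2 (norm_nonneg _)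
            _ = ‖z - α i‖ * (‖b j‖ * r ^ j) := by ring
            _ ≤ ‖z - α i‖ * M := mul_le_mul_of_nonneg_left (hall j) (norm_nonneg _)
            _ ≤ (ε * r / M) * M := mul_le_mul_of_nonneg_right hzα.le hMpos.le
            _ = ε * r := by field_simp
        exact le_of_mul_le_mul_right h3 hrpos
      exact IsUltrametricDist.norm_sum_le_of_forall_le_of_nonneg hε.le hterm
    · -- tail
      apply IsUltrametricDist.norm_tsum_le_of_forall_le_of_nonneg hε.le
      intro j
      have h1 : ‖b (j + (N+1)) * z ^ (j + (N+1))‖ = ‖b (j + (N+1))‖ * r ^ (j + (N+1)) := by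
        rw [norm_mul, norm_pow, hznorm]
      rw [h1]
      apply (hJ (j + (N+1)) ?_).le
      have : J ≤ i := le_max_right _ _
      omega
  by_contra hne
  have hpos : 0 < ‖∑' j, b j * z ^ j‖ := norm_pos_iff.mpr hne
  have := hkey (‖∑' j, b j * z ^ j‖ / 2) (by linarith)
  linarith

end Main

end Montel12

/-- Let k be an algebraically closed complete non-archimedean field and
f(z) = Σ_j a_j z^j a transcendental entire function (everywhere convergent power series with
infinitely many nonzero coefficients).  Then for every w ∈ k the preimage f⁻¹(w) is
unbounded: for every R > 0 there is z with |z| > R and f(z) = w. -/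
theorem montel_stmt12 {k : Type*} [NontriviallyNormedField k] [CompleteSpace k]
    [IsAlgClosed k] [IsUltrametricDist k] (a : ℕ → k)
    (hentire : ∀ r : ℝ, 0 < r →
      Filter.Tendsto (fun j : ℕ => ‖a j‖ * r ^ j) Filter.atTop (nhds 0))
    (htrans : ∀ N : ℕ, ∃ j : ℕ, N ≤ j ∧ a j ≠ 0) :
    ∀ w : k, ∀ R : ℝ, 0 < R → ∃ z : k, R < ‖z‖ ∧ (∑' j : ℕ, a j * z ^ j) = w := by
  intro w R hR
  classical
  set b : ℕ → k := fun j => if j = 0 then a 0 - w else a j with hb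
  have hbeq : ∀ j : ℕ, j ≠ 0 → b j = a j := by
    intro j hj
    rw [hb]
    simp [hj]
  have htendb : ∀ r : ℝ, 0 < r →
      Filter.Tendsto (fun j : ℕ => ‖b j‖ * r ^ j) Filter.atTop (nhds 0) := by
    intro r hr
    refine Filter.Tendsto.congr' ?_ (hentire r hr)
    filter_upwards [Filter.eventually_ge_atTop 1] with j hj
    rw [hbeq j (by omega)]
  have hinfb : ∀ N : ℕ, ∃ j : ℕ, N ≤ j ∧ b j ≠ 0 := by
    intro N
    obtain ⟨j, hj1, hj2⟩ := htrans (max N 1)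
    refine ⟨j, le_trans (le_max_left N 1) hj1, ?_⟩
    rw [hbeq j (by omega)]
    exact hj2
  obtain ⟨z, hzR, hzero⟩ := Montel12.exists_large_zero htendb hinfb hR
  have hzpos : 0 < ‖z‖ := lt_trans hR hzR
  have hsb : Summable (fun j => b j * z ^ j) := by
    apply Montel12.summable_of_norm_tendsto
    have hfe : (fun j => ‖b j * z ^ j‖) = fun j => ‖b j‖ * ‖z‖ ^ j := by
      funext j
      rw [norm_mul, norm_pow]
    rw [hfe]
    exact htendb ‖z‖ hzpos
  have heq : (fun j => a j * z ^ j)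
      = fun j => b j * z ^ j + (if j = 0 then w else 0) := by
    funext j
    rcases j with _ | j
    · simp [hb]
    · simp [hb]
  refine ⟨z, hzR, ?_⟩
  rw [heq, Summable.tsum_add hsb ((hasSum_ite_eq 0 w).summable), hzero, zero_add, tsum_ite_eq]
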